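/- Let N ≥ 2 and A = (a_{ij}) a reaction matrix with a_{ij} ≥ 0 for i≠j and columns summing to zero, and let w = (w₁,…,w_N) with all w_i > 0 satisfy A w = 0 (a complex balance equilibrium). Then for any solution c(t) = (u₁,…,u_N) of c' = Ac, the relative entropy E(t) = ∑_i u_i(t)²/w_i satisfies E'(t) = −∑_{i<j} (a_{ij} w_j + a_{ji} w_i)(u_i/w_i − u_j/w_j)² ≤ 0. -/

import Mathlib

open Finset

private lemma pairsum {N : ℕ} (f : Fin N → Fin N → ℝ) :
    ∑ p ∈ Finset.univ.filter (fun p : Fin N × Fin N => p.1 < p.2), (f p.1 p.2 + f p.2 p.1)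
      = ∑ p ∈ Finset.univ.filter (fun p : Fin N × Fin N => p.1 ≠ p.2), f p.1 p.2 := by
  have hsplit : Finset.univ.filter (fun p : Fin N × Fin N => p.1 ≠ p.2)
      = Finset.univ.filter (fun p : Fin N × Fin N => p.1 < p.2)
        ∪ Finset.univ.filter (fun p : Fin N × Fin N => p.2 < p.1) := by
    ext p
    simp only [Finset.mem_filter, Finset.mem_union, Finset.mem_univ, true_and]
    constructor
    · exact fun h => h.lt_or_gt
    · rintro (h | h)
      · exact h.ne
      · exact h.ne'
  have hdisj : Disjoint (Finset.univ.filter (fun p : Fin N × Fin N => p.1 < p.2))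
      (Finset.univ.filter (fun p : Fin N × Fin N => p.2 < p.1)) := by
    rw [Finset.disjoint_filter]
    intro p _ h1 h2
    exact absurd h2 (not_lt_of_gt h1)
  rw [hsplit, Finset.sum_union hdisj, Finset.sum_add_distrib]
  congr 1
  refine Finset.sum_nbij' (fun p => Prod.swap p) (fun p => Prod.swap p) ?_ ?_ ?_ ?_ ?_
  · intro p hp; simp only [Finset.mem_filter, Finset.mem_univ, true_and] at hp ⊢; exact hp
  · intro p hp; simp only [Finset.mem_filter, Finset.mem_univ, true_and] at hp ⊢; exact hp
  · intro p _; simp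
  · intro p _; simp
  · intro p _; rfl

theorem stmt10 (N : ℕ) (hN : 2 ≤ N) (A : Matrix (Fin N) (Fin N) ℝ)
    (hoff : ∀ i j, i ≠ j → 0 ≤ A i j)
    (hcol : ∀ j, A j j = -∑ i ∈ Finset.univ.erase j, A i j)
    (w : Fin N → ℝ) (hw : ∀ i, 0 < w i)
    (heq : ∀ i, ∑ j, A i j * w j = 0)
    (c : ℝ → Fin N → ℝ)
    (hderiv : ∀ t i, HasDerivAt (fun s => c s i) (∑ j, A i j * c t j) t) :
    ∀ t, HasDerivAt (fun s => ∑ i, (c s i) ^ 2 / w i)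
        (-(∑ p ∈ Finset.univ.filter (fun p : Fin N × Fin N => p.1 < p.2),
            (A p.1 p.2 * w p.2 + A p.2 p.1 * w p.1) *
              (c t p.1 / w p.1 - c t p.2 / w p.2) ^ 2)) t
      ∧ -(∑ p ∈ Finset.univ.filter (fun p : Fin N × Fin N => p.1 < p.2),
            (A p.1 p.2 * w p.2 + A p.2 p.1 * w p.1) *
              (c t p.1 / w p.1 - c t p.2 / w p.2) ^ 2) ≤ 0 := by
  intro t
  have hw0 : ∀ i, w i ≠ 0 := fun i => (hw i).ne'
  -- column sums are zero
  have hA0 : ∀ j, ∑ i, A i j = 0 := by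
    intro j
    rw [← Finset.add_sum_erase _ _ (Finset.mem_univ j), hcol j]
    ring
  set u : Fin N → ℝ := fun i => c t i with hu
  -- the key algebraic identity
  have key : ∑ i, (2 : ℝ) * u i ^ 1 * (∑ j, A i j * u j) / w i
      = -(∑ p ∈ Finset.univ.filter (fun p : Fin N × Fin N => p.1 < p.2),
            (A p.1 p.2 * w p.2 + A p.2 p.1 * w p.1) *
              (u p.1 / w p.1 - u p.2 / w p.2) ^ 2) := by
    -- rewrite the pairwise sum as a sum over ordered pairs of g i j := A i j * w j * (v i - v j)^2
    have h1 : ∑ p ∈ Finset.univ.filter (fun p : Fin N × Fin N => p.1 < p.2),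
          (A p.1 p.2 * w p.2 + A p.2 p.1 * w p.1) * (u p.1 / w p.1 - u p.2 / w p.2) ^ 2
        = ∑ p ∈ Finset.univ.filter (fun p : Fin N × Fin N => p.1 ≠ p.2),
            A p.1 p.2 * w p.2 * (u p.1 / w p.1 - u p.2 / w p.2) ^ 2 := by
      rw [← pairsum (fun i j => A i j * w j * (u i / w i - u j / w j) ^ 2)]
      apply Finset.sum_congr rfl
      intro p _
      ring
    have h2 : ∑ p ∈ Finset.univ.filter (fun p : Fin N × Fin N => p.1 ≠ p.2),
          A p.1 p.2 * w p.2 * (u p.1 / w p.1 - u p.2 / w p.2) ^ 2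
        = ∑ p : Fin N × Fin N, A p.1 p.2 * w p.2 * (u p.1 / w p.1 - u p.2 / w p.2) ^ 2 := by
      apply Finset.sum_filter_of_ne
      intro p _ hne
      rcases eq_or_ne p.1 p.2 with h | h
      · exact absurd (by rw [h]; simp) hne
      · exact h
    rw [h1, h2, Fintype.sum_prod_type]
    -- expand each term
    have h3 : ∀ i j : Fin N, A i j * w j * (u i / w i - u j / w j) ^ 2
        = A i j * w j * (u i / w i) ^ 2 - 2 * (A i j * u j) * (u i / w i)
          + A i j * (u j ^ 2 / w j) := by
      intro i j
      field_simp [hw0]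
      ring
    have h4 : ∑ i, ∑ j, A i j * w j * (u i / w i - u j / w j) ^ 2
        = (∑ i, ∑ j, A i j * w j * (u i / w i) ^ 2)
          - (∑ i, ∑ j, 2 * (A i j * u j) * (u i / w i))
          + (∑ i, ∑ j, A i j * (u j ^ 2 / w j)) := by
      rw [← Finset.sum_sub_distrib, ← Finset.sum_add_distrib]
      apply Finset.sum_congr rfl
      intro i _
      rw [← Finset.sum_sub_distrib, ← Finset.sum_add_distrib]
      exact Finset.sum_congr rfl fun j _ => h3 i j
    have h5 : ∑ i, ∑ j, A i j * w j * (u i / w i) ^ 2 = 0 := by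
      apply Finset.sum_eq_zero
      intro i _
      rw [← Finset.sum_mul, heq i, zero_mul]
    have h6 : ∑ i, ∑ j, A i j * (u j ^ 2 / w j) = 0 := by
      rw [Finset.sum_comm]
      apply Finset.sum_eq_zero
      intro j _
      rw [← Finset.sum_mul, hA0 j, zero_mul]
    have h7 : ∑ i, ∑ j, 2 * (A i j * u j) * (u i / w i)
        = ∑ i, (2 : ℝ) * u i ^ 1 * (∑ j, A i j * u j) / w i := by
      apply Finset.sum_congr rfl
      intro i _
      rw [Finset.mul_sum, Finset.sum_div]
      apply Finset.sum_congr rfl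
      intro j _
      field_simp
    rw [h4, h5, h6, h7]
    ring
  constructor
  · have H : HasDerivAt (fun s => ∑ i, (c s i) ^ 2 / w i)
        (∑ i, (2 : ℝ) * u i ^ 1 * (∑ j, A i j * u j) / w i) t := by
      apply HasDerivAt.fun_sum
      intro i _
      have := ((hderiv t i).pow 2).div_const (w i)
      simpa using this
    rw [key] at H
    exact H
  · rw [neg_nonpos]
    apply Finset.sum_nonneg
    intro p hp
    simp only [Finset.mem_filter, Finset.mem_univ, true_and] at hp
    apply mul_nonneg _ (sq_nonneg _)
    have h1 := mul_nonneg (hoff p.1 p.2 hp.ne) (hw p.2).le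
    have h2 := mul_nonneg (hoff p.2 p.1 hp.ne') (hw p.1).le
    linarith
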